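/- Let m ≥ 1 and let f : ℝᵐ → ℝ be a C¹ (continuously differentiable) convex function. Suppose x̂ ∈ ℝᵐ is a critical point of f (∇f(x̂) = 0) and that f is strictly convex on some open ball centered at x̂. Then x̂ is the unique critical point of f in ℝᵐ, x̂ is the unique global minimizer of f, and f(x) → +∞ as ‖x‖ → ∞. -/

import Mathlib

open Real Set Filter

lemma crit_isMin {m : ℕ} {f : (Fin m → ℝ) → ℝ} (hf : Differentiable ℝ f)
    (hconv : ConvexOn ℝ Set.univ f) {a : Fin m → ℝ} (ha : fderiv ℝ f a = 0)
    (x : Fin m → ℝ) : f a ≤ f x := by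
  set g : ℝ → ℝ := f ∘ (AffineMap.lineMap a x) with hgdef
  have hgc : ConvexOn ℝ Set.univ g := by
    simpa using hconv.comp_affineMap (AffineMap.lineMap a x)
  have hfun : (fun t : ℝ => (AffineMap.lineMap a x) t) = fun t : ℝ => t • (x - a) + a := by
    funext t
    simp only [AffineMap.lineMap_apply_module]
    module
  have hφ : HasDerivAt (fun t : ℝ => (AffineMap.lineMap a x) t) (x - a) 0 := by
    rw [hfun]
    simpa using ((hasDerivAt_id (0:ℝ)).smul_const (x - a)).add_const a
  have h0 : (AffineMap.lineMap a x) (0:ℝ) = a := by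
    simp [AffineMap.lineMap_apply_module]
  have hF : HasFDerivAt f (fderiv ℝ f a) ((AffineMap.lineMap a x) (0:ℝ)) := by
    rw [h0]; exact (hf a).hasFDerivAt
  have hd : HasDerivAt g ((fderiv ℝ f a) (x - a)) 0 := hF.comp_hasDerivAt 0 hφ
  have hslope := hgc.le_slope_of_hasDerivAt (mem_univ (0:ℝ)) (mem_univ (1:ℝ)) one_pos hd
  rw [ha] at hslope
  simp only [ContinuousLinearMap.zero_apply, slope_def_field] at hslope
  have h0' : g 0 = f a := by simp [hgdef, h0]
  have h1 : g 1 = f x := by simp [hgdef, AffineMap.lineMap_apply_module]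
  have : (0:ℝ) ≤ (g 1 - g 0) / (1 - 0) := by simpa using hslope
  rw [h0', h1] at this
  simp at this
  linarith

theorem convex_critical_point_unique_min_and_proper (m : ℕ) (hm : 1 ≤ m)
    (f : (Fin m → ℝ) → ℝ) (hf : ContDiff ℝ 1 f)
    (hconv : ConvexOn ℝ Set.univ f)
    (xhat : Fin m → ℝ) (hcrit : fderiv ℝ f xhat = 0)
    (r : ℝ) (hr : 0 < r) (hstrict : StrictConvexOn ℝ (Metric.ball xhat r) f) :
    (∀ x : Fin m → ℝ, fderiv ℝ f x = 0 → x = xhat) ∧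
      (∀ x : Fin m → ℝ, f xhat ≤ f x ∧ (f x = f xhat → x = xhat)) ∧
      Tendsto f (Filter.comap norm Filter.atTop) Filter.atTop := by
  have hdiff : Differentiable ℝ f := hf.differentiable one_ne_zero
  have hmin : ∀ x, f xhat ≤ f x := crit_isMin hdiff hconv hcrit
  -- uniqueness of the minimizer
  have huniq : ∀ x, f x = f xhat → x = xhat := by
    intro x hx
    by_contra hne
    have hd0 : 0 < ‖x - xhat‖ := norm_pos_iff.mpr (sub_ne_zero.mpr hne)
    set d : ℝ := ‖x - xhat‖ with hd
    set t : ℝ := min (r / (2 * d)) (1/2) with htdef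
    have ht0 : 0 < t := lt_min (by positivity) (by norm_num)
    have ht1 : t < 1 := lt_of_le_of_lt (min_le_right _ _) (by norm_num)
    set y : Fin m → ℝ := xhat + t • (x - xhat) with hy
    have hysub : y - xhat = t • (x - xhat) := by rw [hy]; abel
    have hynorm : ‖y - xhat‖ = t * d := by
      rw [hysub, norm_smul, Real.norm_eq_abs, abs_of_pos ht0]
    have hyball : y ∈ Metric.ball xhat r := by
      rw [Metric.mem_ball, dist_eq_norm, hynorm]
      calc t * d ≤ (r / (2*d)) * d := mul_le_mul_of_nonneg_right (min_le_left _ _) hd0.le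
        _ = r / 2 := by field_simp
        _ < r := by linarith
    have hyne : y ≠ xhat := by
      intro h
      have : t • (x - xhat) = 0 := by rw [← hysub, h, sub_self]
      rcases smul_eq_zero.mp this with h' | h'
      · exact ht0.ne' h'
      · exact hne (by rwa [sub_eq_zero] at h')
    have hycomb : (1 - t) • xhat + t • x = y := by rw [hy]; module
    have hyval : f y = f xhat := by
      have hle := hconv.2 (mem_univ xhat) (mem_univ x) (by linarith : (0:ℝ) ≤ 1 - t)
        ht0.le (by ring)
      rw [hycomb] at hle
      have : f y ≤ (1 - t) * f xhat + t * f x := by simpa [smul_eq_mul] using hle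
      rw [hx] at this
      have h2 : f y ≤ f xhat := by linarith
      exact le_antisymm h2 (hmin y)
    have hxball : xhat ∈ Metric.ball xhat r := Metric.mem_ball_self hr
    have := hstrict.2 hxball hyball (Ne.symm hyne) (by norm_num : (0:ℝ) < 1/2)
      (by norm_num : (0:ℝ) < 1/2) (by norm_num)
    rw [hyval] at this
    simp only [smul_eq_mul] at this
    have hlt : f ((1/2 : ℝ) • xhat + (1/2 : ℝ) • y) < f xhat := by linarith
    exact absurd (hmin _) (not_le.mpr hlt)
  refine ⟨?_, fun x => ⟨hmin x, huniq x⟩, ?_⟩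
  · intro x hx
    exact huniq x (le_antisymm (le_trans (crit_isMin hdiff hconv hx xhat) le_rfl) (hmin x))
  -- properness
  · haveI : Nonempty (Fin m) := ⟨⟨0, hm⟩⟩
    have hr2 : (0:ℝ) < r / 2 := by linarith
    have hSne : (Metric.sphere xhat (r/2)).Nonempty :=
      NormedSpace.sphere_nonempty.mpr hr2.le
    obtain ⟨y0, hy0S, hy0min⟩ := (isCompact_sphere xhat (r/2)).exists_isMinOn hSne
      hdiff.continuous.continuousOn
    set c : ℝ := f y0 - f xhat with hc
    have hy0ne : y0 ≠ xhat := by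
      intro h
      rw [h] at hy0S
      simp [Metric.mem_sphere] at hy0S
      linarith
    have hcpos : 0 < c := by
      have h1 := hmin y0
      have h2 : f y0 ≠ f xhat := fun h => hy0ne (huniq y0 h)
      have : f xhat < f y0 := lt_of_le_of_ne h1 (Ne.symm h2)
      simp [hc]; linarith
    -- key growth bound
    have key : ∀ x : Fin m → ℝ, r / 2 ≤ ‖x - xhat‖ →
        f xhat + c * (2 / r) * ‖x - xhat‖ ≤ f x := by
      intro x hx
      set d : ℝ := ‖x - xhat‖ with hd
      have hd0 : 0 < d := lt_of_lt_of_le hr2 hx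
      set t : ℝ := (r / 2) / d with htdef
      have ht0 : 0 < t := by positivity
      have ht1 : t ≤ 1 := by
        rw [htdef, div_le_one hd0]; exact hx
      set y : Fin m → ℝ := xhat + t • (x - xhat) with hy
      have hysub : y - xhat = t • (x - xhat) := by rw [hy]; abel
      have hyS : y ∈ Metric.sphere xhat (r/2) := by
        rw [Metric.mem_sphere, dist_eq_norm, hysub, norm_smul, Real.norm_eq_abs,
          abs_of_pos ht0, htdef]
        field_simp
        rw [← hd]
      have hycomb : (1 - t) • xhat + t • x = y := by rw [hy]; module
      have hle := hconv.2 (mem_univ xhat) (mem_univ x) (by linarith : (0:ℝ) ≤ 1 - t)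
        ht0.le (by ring)
      rw [hycomb] at hle
      have hfy : f y ≤ (1 - t) * f xhat + t * f x := by simpa [smul_eq_mul] using hle
      have hy0le : f y0 ≤ f y := hy0min hyS
      -- c ≤ t * (f x - f xhat)
      have hct : c ≤ t * (f x - f xhat) := by
        have : f xhat + c ≤ (1 - t) * f xhat + t * f x := by
          rw [hc]; linarith
        nlinarith
      have hmul := mul_le_mul_of_nonneg_right hct (show (0:ℝ) ≤ (2 / r) * d by positivity)
      have hte : t * ((2 / r) * d) = 1 := by
        rw [htdef]; field_simp
      nlinarith [hmul, hte]
    rw [tendsto_atTop]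
    intro b
    set A : ℝ := max (r / 2) ((b - f xhat) * r / (2 * c)) with hA
    have hmem : (norm : (Fin m → ℝ) → ℝ) ⁻¹' (Set.Ici (‖xhat‖ + A)) ∈ Filter.comap norm Filter.atTop :=
      preimage_mem_comap (mem_atTop _)
    filter_upwards [hmem] with x hx
    have hx' : ‖xhat‖ + A ≤ ‖x‖ := hx
    have hnx : A ≤ ‖x - xhat‖ := by
      have := norm_sub_norm_le x xhat
      linarith
    have hAr : r / 2 ≤ A := le_max_left _ _
    have hAb : (b - f xhat) * r / (2 * c) ≤ A := le_max_right _ _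
    have hbound := key x (le_trans hAr hnx)
    have hmono : c * (2 / r) * A ≤ c * (2 / r) * ‖x - xhat‖ := by
      apply mul_le_mul_of_nonneg_left hnx (by positivity)
    have hfinal : b - f xhat ≤ c * (2 / r) * A := by
      have h1 : c * (2 / r) * ((b - f xhat) * r / (2 * c)) = b - f xhat := by
        field_simp
      calc b - f xhat = c * (2 / r) * ((b - f xhat) * r / (2 * c)) := h1.symm
        _ ≤ c * (2 / r) * A := mul_le_mul_of_nonneg_left hAb (by positivity)
    linarith
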